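/- Let S ∈ ℝ^{d×d} be the cyclic shift permutation matrix, let D ∈ ℝ^{d(δ-1)×d} be the block column matrix with blocks I + S, I + S^2, ..., I + S^{δ-1}, and let C be the block matrix [[I_d, 0, 0], [D, 2I_{d(δ-1)}, 0], [D, 0, 2I_{d(δ-1)}]]. Then σ_max(C) ≤ 2 + 2√(2δ) and σ_max(C^{-1}) ≤ 1/2 + √(2δ), so the condition number of C satisfies κ(C) ≤ cδ for an absolute constant c. -/

import Mathlib

open Matrix Real

/-- the cyclic shift permutation matrix `S` on `ℝ^d` -/
def cycShift (d : ℕ) : Matrix (Fin d) (Fin d) ℝ :=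
  Matrix.of fun i j => if (j : ℕ) = ((i : ℕ) + 1) % d then 1 else 0

/-- the block column matrix `D` with blocks `I + S, I + S^2, ..., I + S^{δ-1}` -/
def blockD (d δ : ℕ) : Matrix (Fin (δ - 1) × Fin d) (Fin d) ℝ :=
  Matrix.of fun p j => (1 + (cycShift d) ^ ((p.1 : ℕ) + 1)) p.2 j

/-- `C = [[I, 0, 0], [D, 2I, 0], [D, 0, 2I]]` -/
def matC (d δ : ℕ) :
    Matrix (Fin d ⊕ ((Fin (δ - 1) × Fin d) ⊕ (Fin (δ - 1) × Fin d)))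
      (Fin d ⊕ ((Fin (δ - 1) × Fin d) ⊕ (Fin (δ - 1) × Fin d))) ℝ :=
  Matrix.fromBlocks 1 0
    (Matrix.of fun b a => Sum.elim (fun p => blockD d δ p a) (fun p => blockD d δ p a) b)
    ((2 : ℝ) • 1)

/-- the explicit inverse `C⁻¹ = [[I, 0, 0], [-D/2, I/2, 0], [-D/2, 0, I/2]]` -/
noncomputable def matCinv (d δ : ℕ) :
    Matrix (Fin d ⊕ ((Fin (δ - 1) × Fin d) ⊕ (Fin (δ - 1) × Fin d)))
      (Fin d ⊕ ((Fin (δ - 1) × Fin d) ⊕ (Fin (δ - 1) × Fin d))) ℝ :=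
  Matrix.fromBlocks 1 0
    ((-(1/2) : ℝ) • Matrix.of fun b a =>
      Sum.elim (fun p => blockD d δ p a) (fun p => blockD d δ p a) b)
    (((1:ℝ)/2) • 1)

lemma cycShift_pow (d k : ℕ) (i j : Fin d) :
    (cycShift d ^ k) i j = if (j : ℕ) = ((i : ℕ) + k) % d then 1 else 0 := by
  induction k generalizing j with
  | zero =>
    simp [Matrix.one_apply, Nat.mod_eq_of_lt i.isLt, Fin.ext_iff, eq_comm]
  | succ k ih =>
    have hd : 0 < d := i.pos
    rw [pow_succ, Matrix.mul_apply]
    have : ∀ l : Fin d, (cycShift d ^ k) i l * cycShift d l j =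
        (if l = (⟨((i:ℕ)+k) % d, Nat.mod_lt _ hd⟩ : Fin d) then
          (if (j:ℕ) = ((l:ℕ) + 1) % d then (1:ℝ) else 0) else 0) := by
      intro l
      rw [ih l]
      by_cases h : l = (⟨((i:ℕ)+k) % d, Nat.mod_lt _ hd⟩ : Fin d)
      · simp [h, cycShift]
      · have : ¬ ((l:ℕ) = ((i:ℕ)+k) % d) := fun hv => h (Fin.ext hv)
        simp [this, h]
    rw [Finset.sum_congr rfl fun l _ => this l, Finset.sum_ite_eq']
    simp [Nat.mod_add_mod, Nat.add_assoc]

open Fin.NatCast in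
lemma blockD_mulVec (d δ : ℕ) [NeZero d] (x : Fin d → ℝ) (p : Fin (δ-1) × Fin d) :
    (blockD d δ).mulVec x p = x p.2 + x (p.2 + ((((p.1:ℕ)+1 : ℕ) : Fin d))) := by
  classical
  have hd : 0 < d := Fin.pos p.2
  have hval : ((p.2 + (((p.1:ℕ)+1 : ℕ) : Fin d)) : Fin d).val = ((p.2:ℕ) + ((p.1:ℕ)+1)) % d := by
    rw [Fin.add_def, Fin.val_natCast]
    simp [Nat.add_mod]
  have hterm : ∀ j, blockD d δ p j =
      (if j = p.2 then (1:ℝ) else 0) + (if j = p.2 + (((p.1:ℕ)+1 : ℕ) : Fin d) then 1 else 0) := by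
    intro j
    simp only [blockD, Matrix.of_apply, Matrix.add_apply, Matrix.one_apply, cycShift_pow]
    congr 1
    · simp [eq_comm]
    · rw [← hval]; simp [Fin.val_inj]
  rw [Matrix.mulVec, show (blockD d δ) p = fun j => blockD d δ p j from rfl]
  simp only [hterm]
  rw [dotProduct]
  simp [add_mul, Finset.sum_add_distrib, ite_mul, Finset.sum_ite_eq']

open Fin.NatCast in
lemma blockD_bound (d δ : ℕ) (x : Fin d → ℝ) :
    ∑ p, ((blockD d δ).mulVec x p)^2 ≤ 4 * ((δ-1 : ℕ):ℝ) * ∑ j, (x j)^2 := by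
  rcases Nat.eq_zero_or_pos d with hd | hd
  · subst hd
    have : ∀ p : Fin (δ-1) × Fin 0, False := fun p => p.2.elim0
    simp [Finset.sum_of_isEmpty, Fintype.sum_prod_type]
  · haveI : NeZero d := ⟨hd.ne'⟩
    rw [Fintype.sum_prod_type]
    have key : ∀ (k : Fin (δ-1)), ∑ i : Fin d, ((blockD d δ).mulVec x (k, i))^2
        ≤ 4 * ∑ j, (x j)^2 := by
      intro k
      have hshift : ∑ i : Fin d, (x (i + (((k:ℕ)+1 : ℕ) : Fin d)))^2 = ∑ j, (x j)^2 :=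
        Fintype.sum_equiv (Equiv.addRight (((k:ℕ)+1 : ℕ) : Fin d)) _ _ (fun i => rfl)
      calc ∑ i : Fin d, ((blockD d δ).mulVec x (k, i))^2
          = ∑ i : Fin d, (x i + x (i + (((k:ℕ)+1 : ℕ) : Fin d)))^2 := by
            refine Finset.sum_congr rfl fun i _ => ?_
            rw [blockD_mulVec]
        _ ≤ ∑ i : Fin d, (2*(x i)^2 + 2*(x (i + (((k:ℕ)+1 : ℕ) : Fin d)))^2) :=
            Finset.sum_le_sum fun i _ => by nlinarith [sq_nonneg (x i - x (i + (((k:ℕ)+1 : ℕ) : Fin d)))]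
        _ = 4 * ∑ j, (x j)^2 := by
            rw [Finset.sum_add_distrib, ← Finset.mul_sum, ← Finset.mul_sum, hshift]; ring
    calc ∑ k : Fin (δ-1), ∑ i : Fin d, ((blockD d δ).mulVec x (k, i))^2
        ≤ ∑ _k : Fin (δ-1), 4 * ∑ j, (x j)^2 := Finset.sum_le_sum fun k _ => key k
      _ = 4 * ((δ-1 : ℕ):ℝ) * ∑ j, (x j)^2 := by
          rw [Finset.sum_const, Finset.card_univ, Fintype.card_fin, nsmul_eq_mul]; ring

section mv
variable (d δ : ℕ) (x : (Fin d ⊕ ((Fin (δ - 1) × Fin d) ⊕ (Fin (δ - 1) × Fin d))) → ℝ)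

lemma matC_mv_inl (i : Fin d) : (matC d δ).mulVec x (Sum.inl i) = x (Sum.inl i) := by
  simp [matC, Matrix.mulVec, dotProduct, Fintype.sum_sum_type, Matrix.one_apply, ite_mul,
    Finset.sum_ite_eq']

lemma matC_mv_inr_inl (p : Fin (δ-1) × Fin d) :
    (matC d δ).mulVec x (Sum.inr (Sum.inl p)) =
      (blockD d δ).mulVec (fun j => x (Sum.inl j)) p + 2 * x (Sum.inr (Sum.inl p)) := by
  simp [matC, Matrix.mulVec, dotProduct, Fintype.sum_sum_type, Matrix.one_apply, ite_mul,
    Finset.sum_ite_eq', Matrix.smul_apply, mul_ite]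

lemma matC_mv_inr_inr (p : Fin (δ-1) × Fin d) :
    (matC d δ).mulVec x (Sum.inr (Sum.inr p)) =
      (blockD d δ).mulVec (fun j => x (Sum.inl j)) p + 2 * x (Sum.inr (Sum.inr p)) := by
  simp [matC, Matrix.mulVec, dotProduct, Fintype.sum_sum_type, Matrix.one_apply, ite_mul,
    Finset.sum_ite_eq', Matrix.smul_apply, mul_ite]

lemma matCinv_mv_inl (i : Fin d) : (matCinv d δ).mulVec x (Sum.inl i) = x (Sum.inl i) := by
  simp [matCinv, Matrix.mulVec, dotProduct, Fintype.sum_sum_type, Matrix.one_apply, ite_mul,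
    Finset.sum_ite_eq']

lemma matCinv_mv_inr_inl (p : Fin (δ-1) × Fin d) :
    (matCinv d δ).mulVec x (Sum.inr (Sum.inl p)) =
      -(1/2) * (blockD d δ).mulVec (fun j => x (Sum.inl j)) p + (1/2) * x (Sum.inr (Sum.inl p)) := by
  simp [matCinv, Matrix.mulVec, dotProduct, Fintype.sum_sum_type, Matrix.one_apply, ite_mul,
    Finset.sum_ite_eq', Matrix.smul_apply, mul_ite, Finset.mul_sum, neg_mul, mul_assoc]

lemma matCinv_mv_inr_inr (p : Fin (δ-1) × Fin d) :
    (matCinv d δ).mulVec x (Sum.inr (Sum.inr p)) =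
      -(1/2) * (blockD d δ).mulVec (fun j => x (Sum.inl j)) p + (1/2) * x (Sum.inr (Sum.inr p)) := by
  simp [matCinv, Matrix.mulVec, dotProduct, Fintype.sum_sum_type, Matrix.one_apply, ite_mul,
    Finset.sum_ite_eq', Matrix.smul_apply, mul_ite, Finset.mul_sum, neg_mul, mul_assoc]

end mv

lemma matC_mul_inv (d δ : ℕ) : matC d δ * matCinv d δ = 1 := by
  rw [matC, matCinv, Matrix.fromBlocks_multiply, ← Matrix.fromBlocks_one]
  simp [Matrix.smul_mul, Matrix.mul_smul, smul_smul]

lemma matCinv_mul (d δ : ℕ) : matCinv d δ * matC d δ = 1 := by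
  rw [matC, matCinv, Matrix.fromBlocks_multiply, ← Matrix.fromBlocks_one]
  simp [Matrix.smul_mul, Matrix.mul_smul, smul_smul]

lemma matC_bound (d δ : ℕ) (hδ : 1 ≤ δ)
    (x : (Fin d ⊕ ((Fin (δ - 1) × Fin d) ⊕ (Fin (δ - 1) × Fin d))) → ℝ) :
    Real.sqrt (∑ i, ((matC d δ).mulVec x i)^2) ≤
      (2 + 2 * Real.sqrt (2 * δ)) * Real.sqrt (∑ i, (x i)^2) := by
  set δ' : ℝ := (δ : ℝ) with hδ'def
  have hδ' : 1 ≤ δ' := by rw [hδ'def]; exact_mod_cast hδ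
  set u : Fin (δ-1) × Fin d → ℝ := (blockD d δ).mulVec (fun j => x (Sum.inl j)) with hu
  set A := ∑ j, (x (Sum.inl j))^2 with hA
  set B := ∑ p, (x (Sum.inr (Sum.inl p)))^2 with hB
  set CC := ∑ p, (x (Sum.inr (Sum.inr p)))^2 with hCC
  set U := ∑ p, (u p)^2 with hUdef
  have hU : U ≤ 4*(δ'-1)*A := by
    have := blockD_bound d δ (fun j => x (Sum.inl j))
    rwa [Nat.cast_sub hδ, Nat.cast_one] at this
  have hA0 : 0 ≤ A := Finset.sum_nonneg fun _ _ => sq_nonneg _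
  have hB0 : 0 ≤ B := Finset.sum_nonneg fun _ _ => sq_nonneg _
  have hC0 : 0 ≤ CC := Finset.sum_nonneg fun _ _ => sq_nonneg _
  have hU0 : 0 ≤ U := Finset.sum_nonneg fun _ _ => sq_nonneg _
  have hxsum : ∑ i, (x i)^2 = A + B + CC := by
    rw [Fintype.sum_sum_type, Fintype.sum_sum_type]; ring
  have hT : ∑ i, ((matC d δ).mulVec x i)^2 =
      A + (∑ p, (u p + 2 * x (Sum.inr (Sum.inl p)))^2)
        + (∑ p, (u p + 2 * x (Sum.inr (Sum.inr p)))^2) := by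
    rw [Fintype.sum_sum_type, Fintype.sum_sum_type]
    simp only [matC_mv_inl, matC_mv_inr_inl, matC_mv_inr_inr, ← hu]
    ring
  -- bound the cross terms
  have key : ∀ (v : Fin (δ-1) × Fin d → ℝ),
      (∑ p, (v p)^2 ≥ 0) → ∑ p, (u p + 2 * v p)^2 ≤ 4*δ'*A + 4*(δ'+1)*(∑ p, (v p)^2) := by
    intro v hv0
    have hstep : δ' * (∑ p, (u p + 2 * v p)^2) ≤ (δ'+1)*U + 4*δ'*(δ'+1)*(∑ p, (v p)^2) := by
      rw [Finset.mul_sum]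
      calc ∑ p, δ' * (u p + 2 * v p)^2
          ≤ ∑ p, ((δ'+1)*(u p)^2 + 4*δ'*(δ'+1)*(v p)^2) := by
            refine Finset.sum_le_sum fun p _ => ?_
            nlinarith [sq_nonneg (u p - 2*δ'*(v p)), sq_nonneg (u p), sq_nonneg (v p)]
        _ = (δ'+1)*U + 4*δ'*(δ'+1)*(∑ p, (v p)^2) := by
            rw [Finset.sum_add_distrib, ← Finset.mul_sum, ← Finset.mul_sum]
    have h2 : δ' * (∑ p, (u p + 2 * v p)^2) ≤ δ' * (4*δ'*A + 4*(δ'+1)*(∑ p, (v p)^2)) := by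
      nlinarith [hU, hA0]
    exact le_of_mul_le_mul_left h2 (by linarith)
  have hS1 := key _ hB0
  have hS2 := key _ hC0
  set s := Real.sqrt (2 * δ') with hs
  have hs0 : 0 ≤ s := Real.sqrt_nonneg _
  have hs2 : s^2 = 2*δ' := Real.sq_sqrt (by linarith)
  have hfin : ∑ i, ((matC d δ).mulVec x i)^2 ≤ (2+2*s)^2 * (A+B+CC) := by
    rw [hT]
    nlinarith [hS1, hS2, mul_nonneg hs0 hA0, mul_nonneg hs0 hB0, mul_nonneg hs0 hC0,
      mul_nonneg (by linarith : (0:ℝ) ≤ δ') hA0, mul_nonneg (by linarith : (0:ℝ) ≤ δ') hB0,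
      mul_nonneg (by linarith : (0:ℝ) ≤ δ') hC0]
  calc Real.sqrt (∑ i, ((matC d δ).mulVec x i)^2)
      ≤ Real.sqrt ((2+2*s)^2 * (A+B+CC)) := Real.sqrt_le_sqrt hfin
    _ = (2+2*s) * Real.sqrt (A+B+CC) := by
        rw [Real.sqrt_mul (sq_nonneg _), Real.sqrt_sq (by linarith)]
    _ = (2 + 2 * Real.sqrt (2 * δ)) * Real.sqrt (∑ i, (x i)^2) := by rw [hxsum]

set_option maxHeartbeats 1000000 in
lemma matCinv_bound (d δ : ℕ) (hδ : 1 ≤ δ)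
    (x : (Fin d ⊕ ((Fin (δ - 1) × Fin d) ⊕ (Fin (δ - 1) × Fin d))) → ℝ) :
    Real.sqrt (∑ i, ((matCinv d δ).mulVec x i)^2) ≤
      (1/2 + Real.sqrt (2 * δ)) * Real.sqrt (∑ i, (x i)^2) := by
  set δ' : ℝ := (δ : ℝ) with hδ'def
  have hδ' : 1 ≤ δ' := by rw [hδ'def]; exact_mod_cast hδ
  set u : Fin (δ-1) × Fin d → ℝ := (blockD d δ).mulVec (fun j => x (Sum.inl j)) with hu
  set A := ∑ j, (x (Sum.inl j))^2 with hA
  set B := ∑ p, (x (Sum.inr (Sum.inl p)))^2 with hB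
  set CC := ∑ p, (x (Sum.inr (Sum.inr p)))^2 with hCC
  set U := ∑ p, (u p)^2 with hUdef
  have hU : U ≤ 4*(δ'-1)*A := by
    have := blockD_bound d δ (fun j => x (Sum.inl j))
    rwa [Nat.cast_sub hδ, Nat.cast_one] at this
  have hA0 : 0 ≤ A := Finset.sum_nonneg fun _ _ => sq_nonneg _
  have hB0 : 0 ≤ B := Finset.sum_nonneg fun _ _ => sq_nonneg _
  have hC0 : 0 ≤ CC := Finset.sum_nonneg fun _ _ => sq_nonneg _
  have hU0 : 0 ≤ U := Finset.sum_nonneg fun _ _ => sq_nonneg _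
  have hxsum : ∑ i, (x i)^2 = A + B + CC := by
    rw [Fintype.sum_sum_type, Fintype.sum_sum_type]; ring
  have hT : ∑ i, ((matCinv d δ).mulVec x i)^2 =
      A + (∑ p, (-(1/2) * u p + (1/2) * x (Sum.inr (Sum.inl p)))^2)
        + (∑ p, (-(1/2) * u p + (1/2) * x (Sum.inr (Sum.inr p)))^2) := by
    rw [Fintype.sum_sum_type, Fintype.sum_sum_type]
    simp only [matCinv_mv_inl, matCinv_mv_inr_inl, matCinv_mv_inr_inr, ← hu]
    ring
  have key : ∀ (v : Fin (δ-1) × Fin d → ℝ),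
      (∑ p, (v p)^2 ≥ 0) → ∑ p, (-(1/2) * u p + (1/2) * v p)^2
        ≤ δ'*A + ((δ'+1)/4)*(∑ p, (v p)^2) := by
    intro v hv0
    have hstep : δ' * (∑ p, (-(1/2) * u p + (1/2) * v p)^2)
        ≤ ((δ'+1)/4)*U + (δ'*(δ'+1)/4)*(∑ p, (v p)^2) := by
      rw [Finset.mul_sum]
      calc ∑ p, δ' * (-(1/2) * u p + (1/2) * v p)^2
          ≤ ∑ p, (((δ'+1)/4)*(u p)^2 + (δ'*(δ'+1)/4)*(v p)^2) := by
            refine Finset.sum_le_sum fun p _ => ?_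
            nlinarith [sq_nonneg (u p + δ'*(v p)), sq_nonneg (u p), sq_nonneg (v p)]
        _ = ((δ'+1)/4)*U + (δ'*(δ'+1)/4)*(∑ p, (v p)^2) := by
            rw [Finset.sum_add_distrib, ← Finset.mul_sum, ← Finset.mul_sum]
    have h2 : δ' * (∑ p, (-(1/2) * u p + (1/2) * v p)^2)
        ≤ δ' * (δ'*A + ((δ'+1)/4)*(∑ p, (v p)^2)) := by
      nlinarith [hU, hA0]
    exact le_of_mul_le_mul_left h2 (by linarith)
  have hS1 := key _ hB0
  have hS2 := key _ hC0
  set s := Real.sqrt (2 * δ') with hs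
  have hs0 : 0 ≤ s := Real.sqrt_nonneg _
  have hs2 : s^2 = 2*δ' := Real.sq_sqrt (by linarith)
  have hs1 : 1 ≤ s := by nlinarith [sq_nonneg (s-1)]
  have hfin : ∑ i, ((matCinv d δ).mulVec x i)^2 ≤ (1/2+s)^2 * (A+B+CC) := by
    rw [hT]
    nlinarith [hS1, hS2, mul_nonneg hs0 hA0, mul_nonneg hs0 hB0, mul_nonneg hs0 hC0,
      mul_nonneg (by linarith : (0:ℝ) ≤ δ') hA0, mul_nonneg (by linarith : (0:ℝ) ≤ δ') hB0,
      mul_nonneg (by linarith : (0:ℝ) ≤ δ') hC0, mul_nonneg hs0 hB0]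
  calc Real.sqrt (∑ i, ((matCinv d δ).mulVec x i)^2)
      ≤ Real.sqrt ((1/2+s)^2 * (A+B+CC)) := Real.sqrt_le_sqrt hfin
    _ = (1/2+s) * Real.sqrt (A+B+CC) := by
        rw [Real.sqrt_mul (sq_nonneg _), Real.sqrt_sq (by linarith)]
    _ = (1/2 + Real.sqrt (2 * δ)) * Real.sqrt (∑ i, (x i)^2) := by rw [hxsum]

theorem stmt_14 :
    ∃ c : ℝ, 0 < c ∧ ∀ d δ : ℕ, 1 ≤ δ →
      (matC d δ) * (matCinv d δ) = 1 ∧ (matCinv d δ) * (matC d δ) = 1 ∧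
      (∀ x, Real.sqrt (∑ i, ((matC d δ).mulVec x i)^2) ≤
        (2 + 2 * Real.sqrt (2 * δ)) * Real.sqrt (∑ i, (x i)^2)) ∧
      (∀ x, Real.sqrt (∑ i, ((matCinv d δ).mulVec x i)^2) ≤
        (1/2 + Real.sqrt (2 * δ)) * Real.sqrt (∑ i, (x i)^2)) ∧
      (2 + 2 * Real.sqrt (2 * δ)) * (1/2 + Real.sqrt (2 * δ)) ≤ c * δ := by
  refine ⟨12, by norm_num, fun d δ hδ => ⟨matC_mul_inv d δ, matCinv_mul d δ,
    matC_bound d δ hδ, matCinv_bound d δ hδ, ?_⟩⟩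
  have hδ' : (1:ℝ) ≤ (δ:ℝ) := by exact_mod_cast hδ
  set s := Real.sqrt (2 * (δ:ℝ)) with hs
  have hs0 : 0 ≤ s := Real.sqrt_nonneg _
  have hs2 : s^2 = 2*(δ:ℝ) := Real.sq_sqrt (by linarith)
  have hs1 : 1 ≤ s := by nlinarith [sq_nonneg (s-1)]
  nlinarith [hs2, hs1, hs0]
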